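/- Let E_1,...,E_n be subsets of a finite set Ω and let C ⊆ [0,1]^n be the set of coherent credence vectors (those q for which there exists a probability measure P on Ω with P(E_i) = q_i for all i). Suppose ℓ_1,...,ℓ_n : [0,1]×[0,1] → [0,∞] are each lower semi-continuous and strictly convex when finite in the first argument, with ℓ_i(p,q) = 0 iff p = q, and let L(p,q) = Σ_i ℓ_i(p_i, q_i). If there exists p ∈ C with L(p,q) < ∞, then there exists a unique p* ∈ C minimizing L(·,q) over C; moreover p* = q iff q ∈ C. -/

import Mathlib

open scoped ENNReal BigOperators
open Filter Topology

lemma exists_min_of_lsc {X : Type*} [TopologicalSpace X] [FirstCountableTopology X]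
    {s : Set X} (hs : IsCompact s) (hne : s.Nonempty) {f : X → ℝ≥0∞}
    (hf : LowerSemicontinuousOn f s) : ∃ x ∈ s, ∀ y ∈ s, f x ≤ f y := by
  set m := sInf (f '' s) with hm
  by_cases htop : m = ⊤
  · obtain ⟨x, hx⟩ := hne
    refine ⟨x, hx, fun y hy => ?_⟩
    have := sInf_eq_top.mp htop (f y) (Set.mem_image_of_mem f hy)
    simp [this]
  · have hsel : ∀ k : ℕ, ∃ x ∈ s, f x < m + (k : ℝ≥0∞)⁻¹ := by
      intro k
      have hlt : m < m + (k : ℝ≥0∞)⁻¹ :=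
        ENNReal.lt_add_right htop (by simp [ENNReal.inv_ne_zero])
      obtain ⟨z, hz, hz'⟩ := sInf_lt_iff.mp hlt
      obtain ⟨x, hx, rfl⟩ := hz
      exact ⟨x, hx, hz'⟩
    choose u hu hfu using hsel
    obtain ⟨x, hxs, φ, hφ, hconv⟩ := hs.tendsto_subseq hu
    refine ⟨x, hxs, fun y hy => ?_⟩
    have hxm : f x ≤ m := by
      by_contra h
      push_neg at h
      obtain ⟨c, hc1, hc2⟩ := exists_between h
      have hev := hf x hxs c hc2
      have htend : Tendsto (u ∘ φ) atTop (𝓝[s] x) :=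
        tendsto_nhdsWithin_of_tendsto_nhds_of_eventually_within _ hconv
          (Filter.Eventually.of_forall fun k => hu _)
      have h1 : ∀ᶠ k in atTop, c < f (u (φ k)) := htend.eventually hev
      have h2 : Tendsto (fun k : ℕ => m + ((φ k : ℕ) : ℝ≥0∞)⁻¹) atTop (𝓝 m) := by
        have : Tendsto (fun k : ℕ => ((φ k : ℕ) : ℝ≥0∞)⁻¹) atTop (𝓝 0) :=
          ENNReal.tendsto_inv_nat_nhds_zero.comp hφ.tendsto_atTop
        simpa using (tendsto_const_nhds.add this)
      have h3 : ∀ᶠ k in atTop, m + ((φ k : ℕ) : ℝ≥0∞)⁻¹ < c :=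
        h2.eventually_lt_const hc1
      obtain ⟨k, hk1, hk3⟩ := (h1.and h3).exists
      exact absurd ((hk1.trans (hfu (φ k))).trans hk3) (lt_irrefl c)
    exact hxm.trans (sInf_le (Set.mem_image_of_mem f hy))

set_option maxHeartbeats 1000000 in
/-- existence and uniqueness of the coherent minimizer of an additive loss
built from dissimilarity functions (lower semicontinuous, strictly convex when finite,
vanishing exactly on the diagonal), given that some coherent point has finite loss. -/
theorem exists_unique_coherent_minimizer
    {n : ℕ} {Ω : Type*} [Fintype Ω] (E : Fin n → Finset Ω)
    (C : Set (Fin n → ℝ))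
    (hC : C = {q | (∀ i, q i ∈ Set.Icc (0:ℝ) 1) ∧
      ∃ π : Ω → ℝ, (∀ ω, 0 ≤ π ω) ∧ (∑ ω, π ω) = 1 ∧ ∀ i, (∑ ω ∈ E i, π ω) = q i})
    (ℓ : Fin n → ℝ → ℝ → ℝ≥0∞)
    (hlsc : ∀ i q, q ∈ Set.Icc (0:ℝ) 1 →
      LowerSemicontinuousOn (fun p => ℓ i p q) (Set.Icc (0:ℝ) 1))
    (hconv : ∀ i q, q ∈ Set.Icc (0:ℝ) 1 → ∀ p ∈ Set.Icc (0:ℝ) 1, ∀ p' ∈ Set.Icc (0:ℝ) 1,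
      p ≠ p' → ∀ t ∈ Set.Ioo (0:ℝ) 1,
        ℓ i (t * p + (1 - t) * p') q
            < ENNReal.ofReal t * ℓ i p q + ENNReal.ofReal (1 - t) * ℓ i p' q
        ∨ (ℓ i (t * p + (1 - t) * p') q = ⊤ ∧
            ENNReal.ofReal t * ℓ i p q + ENNReal.ofReal (1 - t) * ℓ i p' q = ⊤))
    (hzero : ∀ i, ∀ p ∈ Set.Icc (0:ℝ) 1, ∀ q ∈ Set.Icc (0:ℝ) 1, (ℓ i p q = 0 ↔ p = q))
    (q : Fin n → ℝ) (hq : ∀ i, q i ∈ Set.Icc (0:ℝ) 1)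
    (hfin : ∃ p ∈ C, (∑ i, ℓ i (p i) (q i)) < ⊤) :
    ∃ pstar ∈ C,
      (∀ p ∈ C, (∑ i, ℓ i (pstar i) (q i)) ≤ ∑ i, ℓ i (p i) (q i)) ∧
      (∀ p' ∈ C, (∀ p ∈ C, (∑ i, ℓ i (p' i) (q i)) ≤ ∑ i, ℓ i (p i) (q i)) → p' = pstar) ∧
      (pstar = q ↔ q ∈ C) := by
  -- basic facts about C
  have hIcc : ∀ p ∈ C, ∀ i, p i ∈ Set.Icc (0:ℝ) 1 := by
    intro p hp i; rw [hC] at hp; exact hp.1 i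
  -- C is the image of the standard simplex
  have himg : C = (fun π : Ω → ℝ => fun i => ∑ ω ∈ E i, π ω) '' stdSimplex ℝ Ω := by
    rw [hC]; ext p
    constructor
    · rintro ⟨-, π, hπ0, hπ1, hπE⟩
      exact ⟨π, ⟨hπ0, hπ1⟩, funext hπE⟩
    · rintro ⟨π, ⟨hπ0, hπ1⟩, rfl⟩
      refine ⟨fun i => ?_, π, hπ0, hπ1, fun i => rfl⟩
      constructor
      · exact Finset.sum_nonneg fun ω _ => hπ0 ω
      · calc (∑ ω ∈ E i, π ω) ≤ ∑ ω, π ω :=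
              Finset.sum_le_sum_of_subset_of_nonneg (Finset.subset_univ _)
                (fun ω _ _ => hπ0 ω)
          _ = 1 := hπ1
  have hCcompact : IsCompact C := by
    rw [himg]
    exact (isCompact_stdSimplex ℝ Ω).image
      (continuous_pi fun i => continuous_finset_sum _ fun ω _ => continuous_apply ω)
  -- midpoints stay in C
  have hmid : ∀ a ∈ C, ∀ b ∈ C,
      (fun i => (1/2 : ℝ) * a i + (1 - 1/2) * b i) ∈ C := by
    intro a ha b hb
    rw [hC] at ha hb ⊢
    obtain ⟨ha1, π, hπ0, hπ1, hπE⟩ := ha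
    obtain ⟨hb1, ρ, hρ0, hρ1, hρE⟩ := hb
    refine ⟨fun i => ?_, fun ω => (1/2 : ℝ) * π ω + (1 - 1/2) * ρ ω,
      fun ω => by nlinarith [hπ0 ω, hρ0 ω], ?_, fun i => ?_⟩
    · have := convex_Icc (0:ℝ) 1 (ha1 i) (hb1 i)
        (by norm_num : (0:ℝ) ≤ 1/2) (by norm_num : (0:ℝ) ≤ 1 - 1/2) (by norm_num)
      simpa [smul_eq_mul] using this
    · rw [Finset.sum_add_distrib, ← Finset.mul_sum, ← Finset.mul_sum, hπ1, hρ1]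
      norm_num
    · rw [Finset.sum_add_distrib, ← Finset.mul_sum, ← Finset.mul_sum, hπE i, hρE i]
  -- the loss function
  set L : (Fin n → ℝ) → ℝ≥0∞ := fun p => ∑ i, ℓ i (p i) (q i) with hL
  have hLlsc : LowerSemicontinuousOn L C := by
    apply lowerSemicontinuousOn_sum
    intro i _ x hx c hc
    have h1 := hlsc i (q i) (hq i) (x i) (hIcc x hx i) c hc
    have h2 : Tendsto (fun p : Fin n → ℝ => p i) (𝓝[C] x) (𝓝[Set.Icc (0:ℝ) 1] (x i)) :=
      ((continuous_apply i).continuousWithinAt).tendsto_nhdsWithin (fun p hp => hIcc p hp i)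
    exact h2.eventually h1
  obtain ⟨p0, hp0, hp0fin⟩ := hfin
  obtain ⟨pstar, hps, hmin⟩ := exists_min_of_lsc hCcompact ⟨p0, hp0⟩ hLlsc
  have hpsfin : L pstar < ⊤ := lt_of_le_of_lt (hmin p0 hp0) hp0fin
  -- key strict convexity step: two distinct minimizers are impossible
  have hkey : ∀ a ∈ C, ∀ b ∈ C, a ≠ b → L a < ⊤ → L b < ⊤ →
      L (fun i => (1/2 : ℝ) * a i + (1 - 1/2) * b i)
        < ENNReal.ofReal (1/2) * L a + ENNReal.ofReal (1 - 1/2) * L b := by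
    intro a ha b hb hab hafin hbfin
    have hafin' : ∀ i, ℓ i (a i) (q i) ≠ ⊤ := by
      intro i
      exact ne_top_of_le_ne_top hafin.ne (Finset.single_le_sum
        (f := fun i => ℓ i (a i) (q i)) (fun j _ => zero_le) (Finset.mem_univ i))
    have hbfin' : ∀ i, ℓ i (b i) (q i) ≠ ⊤ := by
      intro i
      exact ne_top_of_le_ne_top hbfin.ne (Finset.single_le_sum
        (f := fun i => ℓ i (b i) (q i)) (fun j _ => zero_le) (Finset.mem_univ i))
    have hle : ∀ i ∈ Finset.univ, ℓ i ((1/2 : ℝ) * a i + (1 - 1/2) * b i) (q i)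
        ≤ ENNReal.ofReal (1/2) * ℓ i (a i) (q i)
            + ENNReal.ofReal (1 - 1/2) * ℓ i (b i) (q i) := by
      intro i _
      by_cases hi : a i = b i
      · have heq : (1/2 : ℝ) * a i + (1 - 1/2) * b i = a i := by rw [hi]; ring
        rw [heq, hi, ← add_mul, ← ENNReal.ofReal_add (by norm_num) (by norm_num)]
        norm_num
      · rcases hconv i (q i) (hq i) (a i) (hIcc a ha i) (b i) (hIcc b hb i) hi (1/2)
          (by norm_num) with h | h
        · exact h.le
        · exfalso
          rcases ENNReal.add_eq_top.mp h.2 with h' | h'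
          · exact hafin' i (by
              rcases ENNReal.mul_eq_top.mp h' with ⟨_, h''⟩ | ⟨h'', _⟩
              · exact h''
              · exact absurd h'' (by simp [ENNReal.ofReal_ne_top]))
          · exact hbfin' i (by
              rcases ENNReal.mul_eq_top.mp h' with ⟨_, h''⟩ | ⟨h'', _⟩
              · exact h''
              · exact absurd h'' (by simp [ENNReal.ofReal_ne_top]))
    have hex : ∃ i, a i ≠ b i := by
      by_contra h; push_neg at h; exact hab (funext h)
    obtain ⟨i0, hi0⟩ := hex
    have hstrict : ℓ i0 ((1/2 : ℝ) * a i0 + (1 - 1/2) * b i0) (q i0)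
        < ENNReal.ofReal (1/2) * ℓ i0 (a i0) (q i0)
            + ENNReal.ofReal (1 - 1/2) * ℓ i0 (b i0) (q i0) := by
      rcases hconv i0 (q i0) (hq i0) (a i0) (hIcc a ha i0) (b i0) (hIcc b hb i0) hi0 (1/2)
        (by norm_num) with h | h
      · exact h
      · exfalso
        rcases ENNReal.add_eq_top.mp h.2 with h' | h'
        · exact hafin' i0 (by
            rcases ENNReal.mul_eq_top.mp h' with ⟨_, h''⟩ | ⟨h'', _⟩
            · exact h''
            · exact absurd h'' (by simp [ENNReal.ofReal_ne_top]))
        · exact hbfin' i0 (by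
            rcases ENNReal.mul_eq_top.mp h' with ⟨_, h''⟩ | ⟨h'', _⟩
            · exact h''
            · exact absurd h'' (by simp [ENNReal.ofReal_ne_top]))
    calc L (fun i => (1/2 : ℝ) * a i + (1 - 1/2) * b i)
        = ∑ i, ℓ i ((1/2 : ℝ) * a i + (1 - 1/2) * b i) (q i) := by rw [hL]
      _ < ∑ i, (ENNReal.ofReal (1/2) * ℓ i (a i) (q i)
            + ENNReal.ofReal (1 - 1/2) * ℓ i (b i) (q i)) :=
          by
            have hrfin : ∀ i, ENNReal.ofReal (1/2) * ℓ i (a i) (q i)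
                + ENNReal.ofReal (1 - 1/2) * ℓ i (b i) (q i) ≠ ⊤ := fun i =>
              ENNReal.add_ne_top.mpr
                ⟨ENNReal.mul_ne_top ENNReal.ofReal_ne_top (hafin' i),
                 ENNReal.mul_ne_top ENNReal.ofReal_ne_top (hbfin' i)⟩
            rw [← Finset.sum_erase_add _ _ (Finset.mem_univ i0),
                ← Finset.sum_erase_add _ _ (Finset.mem_univ i0)]
            have hsle : ∑ i ∈ Finset.univ.erase i0, ℓ i ((1/2 : ℝ) * a i + (1 - 1/2) * b i) (q i)
                ≤ ∑ i ∈ Finset.univ.erase i0, (ENNReal.ofReal (1/2) * ℓ i (a i) (q i)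
                    + ENNReal.ofReal (1 - 1/2) * ℓ i (b i) (q i)) :=
              Finset.sum_le_sum fun i hi => hle i (Finset.mem_univ i)
            have hsfin : ∑ i ∈ Finset.univ.erase i0, ℓ i ((1/2 : ℝ) * a i + (1 - 1/2) * b i) (q i)
                ≠ ⊤ :=
              ne_top_of_le_ne_top (ENNReal.sum_ne_top.mpr fun i _ => hrfin i) hsle
            exact ENNReal.add_lt_add_of_le_of_lt hsfin hsle hstrict
      _ = ENNReal.ofReal (1/2) * L a + ENNReal.ofReal (1 - 1/2) * L b := by
          rw [hL, Finset.sum_add_distrib, Finset.mul_sum, Finset.mul_sum]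
  -- uniqueness of minimizers
  have huniq : ∀ p' ∈ C, (∀ p ∈ C, L p' ≤ L p) → p' = pstar := by
    intro p' hp' hmin'
    by_contra hne
    have hp'fin : L p' < ⊤ := lt_of_le_of_lt (hmin' p0 hp0) hp0fin
    have hmem := hmid p' hp' pstar hps
    have h1 := hkey p' hp' pstar hps hne hp'fin hpsfin
    have heqL : L p' = L pstar := le_antisymm (hmin' pstar hps) (hmin p' hp')
    have h2 : ENNReal.ofReal (1/2) * L p' + ENNReal.ofReal (1 - 1/2) * L pstar = L p' := by
      rw [heqL, ← add_mul, ← ENNReal.ofReal_add (by norm_num) (by norm_num)]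
      norm_num
    have h3 : L (fun i => (1/2 : ℝ) * p' i + (1 - 1/2) * pstar i) < L p' := h2 ▸ h1
    exact absurd (hmin' _ hmem) (not_le.mpr h3)
  refine ⟨pstar, hps, hmin, huniq, ?_⟩
  constructor
  · rintro rfl; exact hps
  · intro hqC
    have hLq : L q = 0 := by
      rw [hL]
      exact Finset.sum_eq_zero fun i _ => (hzero i (q i) (hq i) (q i) (hq i)).mpr rfl
    have hLps : L pstar = 0 := le_antisymm (hLq ▸ hmin q hqC) zero_le
    have := (Finset.sum_eq_zero_iff).mp hLps
    funext i
    exact (hzero i (pstar i) (hIcc pstar hps i) (q i) (hq i)).mp (this i (Finset.mem_univ i))
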